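/- Let (X, A, f, α) be a micro-macro dynamical system such that for every pair a, b ∈ A with |f⁻¹(a)| < |f⁻¹(b)| we have T_{ab} ≤ ε/|A_{<b}|, where A_{<b} = {a ∈ A : |f⁻¹(a)| < |f⁻¹(b)|}. Then |D| ≤ ε|X|. -/

import Mathlib

open Finset

/-- If `T_{ab} ≤ ε/|A_{<b}|` whenever `|f⁻¹(a)| < |f⁻¹(b)|`, then `|D| ≤ ε|X|`. -/
theorem stmt6 {X A : Type*} [Fintype X] [Fintype A] [DecidableEq A]
    (f : X → A) (hf : Function.Surjective f) (α : X → X)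
    (fib : A → ℕ) (hfib : ∀ a, fib a = (univ.filter (fun i => f i = a)).card)
    (T : A → A → ℝ)
    (hT : ∀ a b, T a b = ((univ.filter (fun i => f i = b ∧ f (α i) = a)).card : ℝ) / fib b)
    (ε : ℝ) (hε : 0 ≤ ε)
    (hTb : ∀ a b, fib a < fib b →
      T a b ≤ ε / ((univ.filter (fun a' => fib a' < fib b)).card : ℝ)) :
    ((univ.filter (fun i => fib (f (α i)) < fib (f i))).card : ℝ) ≤ ε * Fintype.card X := by
  classical
  set S := univ.filter (fun i : X => fib (f (α i)) < fib (f i)) with hS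
  have hfibpos : ∀ b, 0 < fib b := by
    intro b
    rw [hfib b]
    obtain ⟨x, hx⟩ := hf b
    exact card_pos.2 ⟨x, mem_filter.2 ⟨mem_univ x, hx⟩⟩
  have hXcard : (Fintype.card X : ℝ) = ∑ b, (fib b : ℝ) := by
    have : (univ : Finset X).card = ∑ b, (univ.filter (fun i => f i = b)).card :=
      card_eq_sum_card_fiberwise (fun i _ => mem_univ (f i))
    rw [Fintype.card, this, Nat.cast_sum]
    exact Finset.sum_congr rfl (fun b _ => by rw [hfib b])
  rw [hXcard, Finset.mul_sum]
  have hcard : S.card = ∑ b, (S.filter (fun i => f i = b)).card :=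
    card_eq_sum_card_fiberwise (fun i _ => mem_univ (f i))
  rw [hcard, Nat.cast_sum]
  apply Finset.sum_le_sum
  intro b _
  set Ab := univ.filter (fun a' => fib a' < fib b) with hAb
  have hSb : (S.filter (fun i => f i = b)).card
      = ∑ a ∈ Ab, ((S.filter (fun i => f i = b)).filter (fun i => f (α i) = a)).card := by
    apply card_eq_sum_card_fiberwise
    intro i hi
    replace hi : i ∈ S.filter (fun i => f i = b) := hi
    simp only [hS, mem_filter, mem_univ, true_and] at hi
    show f (α i) ∈ Ab
    simp only [hAb, mem_filter, mem_univ, true_and]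
    exact hi.2 ▸ hi.1
  rw [hSb, Nat.cast_sum]
  -- each inner set equals the full count set
  have hset : ∀ a ∈ Ab, ((S.filter (fun i => f i = b)).filter (fun i => f (α i) = a))
      = univ.filter (fun i => f i = b ∧ f (α i) = a) := by
    intro a ha
    simp only [hAb, mem_filter, mem_univ, true_and] at ha
    ext i
    simp only [hS, mem_filter, mem_univ, true_and]
    constructor
    · rintro ⟨⟨_, hb⟩, haa⟩; exact ⟨hb, haa⟩
    · rintro ⟨hb, haa⟩
      exact ⟨⟨by rw [haa, hb]; exact ha, hb⟩, haa⟩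
  have hAbpos : ∀ a ∈ Ab, (0:ℝ) < (Ab.card : ℝ) := fun a ha => by
    exact_mod_cast card_pos.2 ⟨a, ha⟩
  calc (∑ a ∈ Ab, (((S.filter (fun i => f i = b)).filter (fun i => f (α i) = a)).card : ℝ))
      ≤ ∑ a ∈ Ab, ε / (Ab.card : ℝ) * (fib b : ℝ) := by
        apply Finset.sum_le_sum
        intro a ha
        rw [hset a ha]
        have hlt : fib a < fib b := by simpa [hAb] using ha
        have hT' := hTb a b hlt
        rw [hT a b] at hT'
        have hb0 : (0 : ℝ) < (fib b : ℝ) := by exact_mod_cast hfibpos b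
        rw [div_le_div_iff₀ hb0 (hAbpos a ha)] at hT'
        rw [div_mul_eq_mul_div, le_div_iff₀ (hAbpos a ha)]
        linarith
    _ ≤ ε * (fib b : ℝ) := by
        rw [Finset.sum_const, nsmul_eq_mul]
        rcases Finset.eq_empty_or_nonempty Ab with h | ⟨a, ha⟩
        · simp [h]
          positivity
        · have h0 := hAbpos a ha
          apply le_of_eq
          field_simp
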